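/- For all x in (0, c] with c = -((π³-60(π-2))π³)/(240(π³-24(π-2))), the function F₁(x) = ln(sin x) - ln x - θ₁(x)·ln(2/π + ((π-2)/π³)(π²-4x²)) is positive, where θ₁(x) = ((π³-60π+120)/(720(π-2)))x² + π³/(24(π-2)). -/

import Mathlib

open Real

set_option maxHeartbeats 1000000 in
private lemma chain_aux {f f' : ℝ → ℝ} (hder : ∀ t, HasDerivAt f (f' t) t)
    (h0 : f 0 = 0) (hpos : ∀ t, 0 ≤ t → 0 ≤ f' t) {x : ℝ} (hx : 0 ≤ x) : 0 ≤ f x := by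
  have hmono : MonotoneOn f (Set.Icc 0 x) := by
    apply monotoneOn_of_deriv_nonneg (convex_Icc 0 x)
    · exact fun t _ => (hder t).continuousAt.continuousWithinAt
    · exact fun t _ => (hder t).differentiableAt.differentiableWithinAt
    · intro t ht
      rw [interior_Icc] at ht
      rw [(hder t).deriv]
      exact hpos t ht.1.le
  have h := hmono (Set.left_mem_Icc.mpr hx) (Set.right_mem_Icc.mpr hx) hx
  rw [h0] at h
  exact h

private lemma sin_ge_cubic (t : ℝ) (ht : 0 ≤ t) : 0 ≤ Real.sin t - (t - t ^ 3 / 6) := by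
  apply chain_aux (f' := fun t => Real.cos t - (1 - t ^ 2 / 2)) _ (by simp) _ ht
  · intro t
    have h1 := (Real.hasDerivAt_sin t).sub
      (((hasDerivAt_id t).sub ((hasDerivAt_pow 3 t).div_const 6)))
    refine h1.congr_deriv ?_
    norm_num; ring
  · intro t _
    have := Real.one_sub_sq_div_two_le_cos (x := t)
    linarith

private lemma cos_le_quartic (t : ℝ) (ht : 0 ≤ t) :
    0 ≤ (1 - t ^ 2 / 2 + t ^ 4 / 24) - Real.cos t := by
  apply chain_aux (f' := fun t => (-t + t ^ 3 / 6) + Real.sin t) _ (by simp) _ ht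
  · intro t
    have h1 := ((((hasDerivAt_pow 2 t).div_const 2).neg.add
      ((hasDerivAt_pow 4 t).div_const 24)).add_const 1).sub (Real.hasDerivAt_cos t)
    refine (h1.congr_deriv ?_).congr_of_eventuallyEq (Filter.Eventually.of_forall fun y => ?_)
    · norm_num; ring
    · simp; ring
  · intro t ht'
    have := sin_ge_cubic t ht'
    linarith

private lemma sin_le_quintic (t : ℝ) (ht : 0 ≤ t) :
    0 ≤ (t - t ^ 3 / 6 + t ^ 5 / 120) - Real.sin t := by
  apply chain_aux (f' := fun t => (1 - t ^ 2 / 2 + t ^ 4 / 24) - Real.cos t) _ (by simp) _ ht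
  · intro t
    have h1 := (((hasDerivAt_id t).sub ((hasDerivAt_pow 3 t).div_const 6)).add
      ((hasDerivAt_pow 5 t).div_const 120)).sub (Real.hasDerivAt_sin t)
    refine h1.congr_deriv ?_
    norm_num; ring
  · intro t ht'
    exact cos_le_quartic t ht'

private lemma cos_ge_sextic (t : ℝ) (ht : 0 ≤ t) :
    0 ≤ Real.cos t - (1 - t ^ 2 / 2 + t ^ 4 / 24 - t ^ 6 / 720) := by
  apply chain_aux (f' := fun t => (t - t ^ 3 / 6 + t ^ 5 / 120) - Real.sin t) _ (by simp) _ ht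
  · intro t
    have h1 := (Real.hasDerivAt_cos t).sub
      (((((hasDerivAt_pow 2 t).div_const 2).neg.add ((hasDerivAt_pow 4 t).div_const 24)).sub
        ((hasDerivAt_pow 6 t).div_const 720)).add_const 1)
    refine (h1.congr_deriv ?_).congr_of_eventuallyEq (Filter.Eventually.of_forall fun y => ?_)
    · norm_num; ring
    · simp; ring
  · intro t ht'
    exact sin_le_quintic t ht'

private lemma sin_lb (t : ℝ) (ht : 0 ≤ t) :
    0 ≤ Real.sin t - (t - t ^ 3 / 6 + t ^ 5 / 120 - t ^ 7 / 5040) := by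
  apply chain_aux
    (f' := fun t => Real.cos t - (1 - t ^ 2 / 2 + t ^ 4 / 24 - t ^ 6 / 720)) _ (by simp) _ ht
  · intro t
    have h1 := (Real.hasDerivAt_sin t).sub
      ((((hasDerivAt_id t).sub ((hasDerivAt_pow 3 t).div_const 6)).add
        ((hasDerivAt_pow 5 t).div_const 120)).sub ((hasDerivAt_pow 7 t).div_const 5040))
    refine h1.congr_deriv ?_
    norm_num; ring
  · intro t ht'
    exact cos_ge_sextic t ht'

set_option maxHeartbeats 1000000 in
private lemma key_poly (k u : ℝ) (hk1 : 0.147272 ≤ k) (hk2 : k ≤ 0.147273)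
    (hu0 : 0 < u) (hu2 : u ≤ 1.802) :
    6 * k * ((u/6 - u^2/120 + u^3/5040) + (u/6 - u^2/120 + u^3/5040)^2/2
        + (u/6 - u^2/120 + u^3/5040)^3/3 + (285/1000000) * u^4)
    < (1 + u/30 - k*u/2) * (k*u + (k*u)^2/2 + (k*u)^3/3 + (k*u)^4/4 + (k*u)^5/5
        - (46/1000000) * u^4) := by
  have hk0 : (0:ℝ) < k := by linarith
  have hp2l : (0.021689:ℝ) ≤ k^2 := by nlinarith
  have hp2u : k^2 ≤ (0.02168934:ℝ) := by nlinarith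
  have hp4l : (0.00047041:ℝ) ≤ k^4 := by nlinarith
  have hp4u : k^4 ≤ (0.00047043:ℝ) := by nlinarith
  have hp5l : (0.00006927:ℝ) ≤ k^5 := by nlinarith
  have hp5u : k^5 ≤ (0.00006929:ℝ) := by nlinarith
  have hp6u : k^6 ≤ (0.0000102033:ℝ) := by nlinarith
  have hc3 : (0.0003159:ℝ) ≤ k^3/12 + k^2/60 - 2*k/945 := by nlinarith
  have hc4 : -(0.0000786:ℝ) ≤ k^4/12 + k^3/90 - (1019/1400000)*k - 23/500000 := by nlinarith
  have hc5 : -(0.0000027:ℝ) ≤ 3*k^5/40 + k^4/120 - 23/15000000 - (1879/27000000)*k := by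
    nlinarith
  have hc6 : (0:ℝ) ≤ k^5/150 - k^6/10 + (23/5292000)*k := by nlinarith
  have hu4 : u^2 ≤ 1.802^2 := pow_le_pow_left₀ hu0.le hu2 2
  have h4 : (k^4/12 + k^3/90 - (1019/1400000)*k - 23/500000) * u ≥ -(0.0000786:ℝ) * 1.802 := by
    nlinarith [mul_nonneg (sub_nonneg.mpr hc4) hu0.le]
  have h5 : (3*k^5/40 + k^4/120 - 23/15000000 - (1879/27000000)*k) * u^2
      ≥ -(0.0000027:ℝ) * 1.802^2 := by
    nlinarith [mul_nonneg (sub_nonneg.mpr hc5) (sq_nonneg u)]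
  have h6 : (0:ℝ) ≤ (k^5/150 - k^6/10 + (23/5292000)*k) * u^3 :=
    mul_nonneg hc6 (by positivity)
  have h7 : (-(31/254016000)*k) * u^4 ≥ -(0.0000002:ℝ) := by
    have hu6 : u^4 ≤ 1.802^4 := pow_le_pow_left₀ hu0.le hu2 4
    nlinarith [pow_nonneg hu0.le 4]
  have h8 : (0:ℝ) ≤ ((1/508032000)*k) * u^5 := by positivity
  have h9 : (-(1/64012032000)*k) * u^6 ≥ -(0.0000000001:ℝ) := by
    have hu8 : u^6 ≤ 1.802^6 := pow_le_pow_left₀ hu0.le hu2 6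
    nlinarith [pow_nonneg hu0.le 6]
  rw [← sub_pos]
  have e : (1 + u/30 - k*u/2) * (k*u + (k*u)^2/2 + (k*u)^3/3 + (k*u)^4/4 + (k*u)^5/5
        - (46/1000000) * u^4)
      - 6 * k * ((u/6 - u^2/120 + u^3/5040) + (u/6 - u^2/120 + u^3/5040)^2/2
        + (u/6 - u^2/120 + u^3/5040)^3/3 + (285/1000000) * u^4)
      = u^3 * ((k^3/12 + k^2/60 - 2*k/945)
        + (k^4/12 + k^3/90 - (1019/1400000)*k - 23/500000) * u
        + (3*k^5/40 + k^4/120 - 23/15000000 - (1879/27000000)*k) * u^2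
        + (k^5/150 - k^6/10 + (23/5292000)*k) * u^3
        + (-(31/254016000)*k) * u^4
        + ((1/508032000)*k) * u^5
        + (-(1/64012032000)*k) * u^6) := by ring
  rw [e]
  exact mul_pos (pow_pos hu0 3) (by linarith)


set_option maxHeartbeats 2000000 in
theorem F1_pos (x : ℝ) (hx : 0 < x)
    (hx' : x ≤ -((π ^ 3 - 60 * (π - 2)) * π ^ 3) / (240 * (π ^ 3 - 24 * (π - 2)))) :
    Real.log (Real.sin x) - Real.log x -
      ((π ^ 3 - 60 * π + 120) / (720 * (π - 2)) * x ^ 2 + π ^ 3 / (24 * (π - 2))) *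
        Real.log (2 / π + (π - 2) / π ^ 3 * (π ^ 2 - 4 * x ^ 2)) > 0 := by
  have hπl := Real.pi_gt_d6
  have hπu := Real.pi_lt_d6
  have hπ0 : (0:ℝ) < π := Real.pi_pos
  have hπ2 : (0:ℝ) < π - 2 := by linarith
  -- bound x
  have hD : (0:ℝ) < 240 * (π ^ 3 - 24 * (π - 2)) := by
    nlinarith [sq_nonneg (π - 3.1415926)]
  have hxle : x ≤ 1.34238 := by
    have h1 : -((π ^ 3 - 60 * (π - 2)) * π ^ 3) / (240 * (π ^ 3 - 24 * (π - 2)))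
        ≤ 1.34238 := by
      rw [div_le_iff₀ hD]
      nlinarith [sq_nonneg (π - 3.1415926), sq_nonneg (π - 3.1415927),
        sq_nonneg (π^2 - 9.869604), sq_nonneg (π^3 - 31.00627)]
    linarith
  obtain ⟨u, hu⟩ : ∃ u : ℝ, u = x ^ 2 := ⟨_, rfl⟩
  have hu0 : 0 < u := by rw [hu]; positivity
  have hu2 : u ≤ 1.802 := by rw [hu]; nlinarith
  obtain ⟨k, hk⟩ : ∃ k : ℝ, k = 4 * (π - 2) / π ^ 3 := ⟨_, rfl⟩
  have hk1 : (0.147272:ℝ) ≤ k := by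
    rw [hk, le_div_iff₀ (by positivity : (0:ℝ) < π ^ 3)]
    nlinarith [sq_nonneg (π - 3.1415927), sq_nonneg π]
  have hk2 : k ≤ (0.147273:ℝ) := by
    rw [hk, div_le_iff₀ (by positivity : (0:ℝ) < π ^ 3)]
    nlinarith [sq_nonneg (π - 3.1415926), sq_nonneg π]
  have hk0 : (0:ℝ) < k := by linarith
  have hku : k * u ≤ 0.2654 := by nlinarith [mul_le_mul hk2 hu2 hu0.le (by norm_num : (0:ℝ) ≤ 0.147273)]
  have hku0 : 0 < k * u := mul_pos hk0 hu0
  have hku1 : k * u < 1 := by linarith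
  -- rewrite the argument of the second log and the theta coefficient
  have hgrw : 2 / π + (π - 2) / π ^ 3 * (π ^ 2 - 4 * x ^ 2) = 1 - k * u := by
    rw [hk, hu]
    field_simp
    ring
  obtain ⟨θ, hθdef⟩ : ∃ t : ℝ,
      t = (π ^ 3 - 60 * π + 120) / (720 * (π - 2)) * x ^ 2 + π ^ 3 / (24 * (π - 2)) :=
    ⟨_, rfl⟩
  rw [hgrw, ← hθdef]
  -- s and the sine bound
  obtain ⟨s, hs⟩ : ∃ s : ℝ, s = u / 6 - u ^ 2 / 120 + u ^ 3 / 5040 := ⟨_, rfl⟩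
  have hsu6 : s ≤ u / 6 := by rw [hs]; nlinarith
  have hs0 : 0 < s := by rw [hs]; nlinarith
  have hsb : s ≤ 0.300334 := by linarith
  have hs1 : s < 1 := by linarith
  have h1s : 0 < 1 - s := by linarith
  have hsx : 0 < Real.sin x := by
    apply Real.sin_pos_of_pos_of_lt_pi hx
    linarith
  have hsinlb := sin_lb x hx.le
  have hsdiv : 1 - s ≤ Real.sin x / x := by
    rw [le_div_iff₀ hx]
    have hexp : (1 - s) * x = x - x ^ 3 / 6 + x ^ 5 / 120 - x ^ 7 / 5040 := by
      rw [hs, hu]; ring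
    rw [hexp]
    linarith
  have hlog1 : Real.log (1 - s) ≤ Real.log (Real.sin x / x) :=
    Real.log_le_log h1s hsdiv
  have hlogdiv : Real.log (Real.sin x / x) = Real.log (Real.sin x) - Real.log x :=
    Real.log_div hsx.ne' hx.ne'
  -- log series bound for log(1-s)
  have hBlog : -(s + s^2/2 + s^3/3 + s^4/4 + s^5/5 + s^6/6) - s^7/(1-s)
      ≤ Real.log (1 - s) := by
    have habs := Real.abs_log_sub_add_sum_range_le (x := s) (by rw [abs_of_pos hs0]; exact hs1) 6
    rw [abs_of_pos hs0] at habs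
    have hsum : (∑ i ∈ Finset.range 6, s ^ (i + 1) / (i + 1)) =
        s + s^2/2 + s^3/3 + s^4/4 + s^5/5 + s^6/6 := by
      simp [Finset.sum_range_succ]
      norm_num
    rw [hsum] at habs
    have h := abs_le.mp habs
    linarith [h.1]
  -- log series bound for log(1-ku)
  have hAlog : Real.log (1 - k*u)
      ≤ -(k*u + (k*u)^2/2 + (k*u)^3/3 + (k*u)^4/4 + (k*u)^5/5) + (k*u)^6/(1-k*u) := by
    have habs := Real.abs_log_sub_add_sum_range_le (x := k*u)
      (by rw [abs_of_pos hku0]; exact hku1) 5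
    rw [abs_of_pos hku0] at habs
    have hsum : (∑ i ∈ Finset.range 5, (k*u) ^ (i + 1) / (i + 1)) =
        k*u + (k*u)^2/2 + (k*u)^3/3 + (k*u)^4/4 + (k*u)^5/5 := by
      simp [Finset.sum_range_succ]
      norm_num
    rw [hsum] at habs
    have h := abs_le.mp habs
    linarith [h.2]
  -- theta nonneg and identity
  have hθeq : θ = (u * (π ^ 3 - 60 * π + 120) + 30 * π ^ 3) / (720 * (π - 2)) := by
    rw [hθdef, hu]
    field_simp
    ring
  have hθ0 : 0 ≤ θ := by
    rw [hθeq]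
    apply div_nonneg _ (by nlinarith)
    nlinarith
  have h6kθ : 6 * k * θ = 1 + u / 30 - k * u / 2 := by
    rw [hθeq, hk]
    field_simp
    ring
  -- remainder bound A
  have hden : (0.734:ℝ) ≤ 1 - k * u := by linarith
  have hremA : (k*u)^6/(1-k*u) ≤ (46/1000000) * u^4 := by
    rw [div_le_iff₀ (by linarith : (0:ℝ) < 1 - k*u)]
    have hk2' : k^2 ≤ (0.02168934:ℝ) := by nlinarith
    have hk6 : k^6 ≤ (0.0000102033:ℝ) := by
      have h1 : k^6 = (k^2)^3 := by ring
      have h2 : (k^2)^3 ≤ (0.02168934:ℝ)^3 :=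
        pow_le_pow_left₀ (sq_nonneg k) hk2' 3
      rw [h1]
      calc (k^2)^3 ≤ (0.02168934:ℝ)^3 := h2
        _ ≤ (0.0000102033:ℝ) := by norm_num
    have hu4 : u^2 ≤ 1.802^2 := pow_le_pow_left₀ hu0.le hu2 2
    have step1 : (k*u)^6 = (k^6*u^2)*u^4 := by ring
    have step2 : k^6*u^2 ≤ 0.0000102033 * 1.802^2 :=
      mul_le_mul hk6 hu4 (sq_nonneg u) (by norm_num)
    have step3 : (0:ℝ) ≤ 46/1000000*(1-k*u) - 0.0000102033 * 1.802^2 := by nlinarith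
    linarith [mul_nonneg (pow_nonneg hu0.le 4) step3,
      mul_le_mul_of_nonneg_right step2 (pow_nonneg hu0.le 4), step1.le, step1.ge]
  -- remainder bound B
  have hremB : s^4/4 + s^5/5 + s^6/6 + s^7/(1-s) ≤ (285/1000000) * u^4 := by
    have h1ms : (0.699666:ℝ) ≤ 1 - s := by linarith
    have hdiv : s^7/(1-s) ≤ s^7/0.699666 :=
      div_le_div_of_nonneg_left (by positivity) (by norm_num) h1ms
    have hs4 : s^4 ≤ (u/6)^4 := pow_le_pow_left₀ hs0.le hsu6 4
    have h5' : s^5 ≤ 0.300334 * s^4 := by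
      have h := mul_le_mul_of_nonneg_right hsb (pow_nonneg hs0.le 4)
      have e : s * s^4 = s^5 := by ring
      linarith [e ▸ h]
    have h6' : s^6 ≤ 0.300334 * s^5 := by
      have h := mul_le_mul_of_nonneg_right hsb (pow_nonneg hs0.le 5)
      have e : s * s^5 = s^6 := by ring
      linarith [e ▸ h]
    have h7' : s^7 ≤ 0.300334 * s^6 := by
      have h := mul_le_mul_of_nonneg_right hsb (pow_nonneg hs0.le 6)
      have e : s * s^6 = s^7 := by ring
      linarith [e ▸ h]
    have hs5nn : (0:ℝ) ≤ s^5 := by positivity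
    have hs6nn : (0:ℝ) ≤ s^6 := by positivity
    have h6'' : s^6 ≤ 0.0902006 * s^4 := by linarith
    have h7'' : s^7 ≤ 0.0270906 * s^4 := by linarith
    have hq7 : s^7/0.699666 = (1000000/699666) * s^7 := by ring
    have hsum2 : s^4/4 + s^5/5 + s^6/6 + s^7/0.699666 ≤ 0.36383 * s^4 := by
      rw [hq7]
      linarith [pow_nonneg hs0.le 4]
    have hq : (u/6)^4 = u^4/1296 := by ring
    have hfin : (0.36383:ℝ) * s^4 ≤ (285/1000000) * u^4 := by
      rw [hq] at hs4
      linarith [pow_nonneg hs0.le 4]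
    linarith
  -- key polynomial inequality, converted to theta form
  have key := key_poly k u hk1 hk2 hu0 hu2
  have key2 : 6*k*((s + s^2/2 + s^3/3) + (285/1000000) * u^4)
      < 6*k*(θ * (k*u + (k*u)^2/2 + (k*u)^3/3 + (k*u)^4/4 + (k*u)^5/5
        - (46/1000000) * u^4)) := by
    have e2 : (1 + u/30 - k*u/2) * (k*u + (k*u)^2/2 + (k*u)^3/3 + (k*u)^4/4 + (k*u)^5/5
        - (46/1000000) * u^4)
        = 6*k*(θ * (k*u + (k*u)^2/2 + (k*u)^3/3 + (k*u)^4/4 + (k*u)^5/5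
        - (46/1000000) * u^4)) := by
      rw [← h6kθ]; ring
    rw [← e2, hs]
    convert key using 2 <;> ring
  have key3 : (s + s^2/2 + s^3/3) + (285/1000000) * u^4
      < θ * (k*u + (k*u)^2/2 + (k*u)^3/3 + (k*u)^4/4 + (k*u)^5/5 - (46/1000000) * u^4) :=
    lt_of_mul_lt_mul_left key2 (by positivity)
  -- combine
  have hmul : θ * Real.log (1 - k*u)
      ≤ θ * (-(k*u + (k*u)^2/2 + (k*u)^3/3 + (k*u)^4/4 + (k*u)^5/5 - (46/1000000) * u^4)) := by
    apply mul_le_mul_of_nonneg_left _ hθ0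
    linarith
  have hlhs : Real.log (Real.sin x) - Real.log x ≥ Real.log (1 - s) := by
    rw [← hlogdiv]; exact hlog1
  linarith [hmul, key3, hBlog, hremB, hlhs]
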